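/- For every real η ≥ 1, R ≥ 1 and integer r ≥ 1, the integral ∫_{−R}^{R} min(1, 1/(r‖ηz‖)) dz is at most C · R · log(e·r)/r for an absolute constant C, where ‖x‖ denotes distance to the nearest integer. -/

import Mathlib

open Real

/-- There is an absolute constant C such that for all real η ≥ 1, R ≥ 1 and all
integers r ≥ 1, ∫_{−R}^{R} min(1, 1/(r‖ηz‖)) dz ≤ C · R · Log(r)/r, where ‖x‖
denotes the distance from x to the nearest integer and Log(r) = max(1, log r). -/
theorem integral_min_inv_dist_bound :
    ∃ C : ℝ, 0 < C ∧ ∀ (η R : ℝ) (r : ℕ), 1 ≤ η → 1 ≤ R → 1 ≤ r →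
      (∫ z in (-R)..R, min 1 ((r * |η * z - round (η * z)|)⁻¹)) ≤
        C * R * max 1 (Real.log r) / r := by
  refine ⟨16, by norm_num, fun η R r hη hR hr => ?_⟩
  set L : ℝ := max 1 (Real.log r) with hL
  have hL1 : (1 : ℝ) ≤ L := le_max_left _ _
  have hr0 : (0 : ℝ) < r := by exact_mod_cast Nat.lt_of_lt_of_le Nat.zero_lt_one hr
  have hr1 : (1 : ℝ) ≤ r := by exact_mod_cast hr
  have hη0 : (0 : ℝ) < η := lt_of_lt_of_le one_pos hη
  set f : ℝ → ℝ := fun u => min 1 ((r * |u - round u|)⁻¹) with hf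
  have hf_nonneg : ∀ u, 0 ≤ f u := fun u =>
    le_min zero_le_one (inv_nonneg.2 (by positivity))
  have hf_le_one : ∀ u, f u ≤ 1 := fun u => min_le_left _ _
  -- measurability
  have hmeas : Measurable f := by
    have h1 : Measurable fun u : ℝ => ((round u : ℤ) : ℝ) := by
      have h2 : Measurable fun u : ℝ => (⌊u + 1 / 2⌋ : ℤ) :=
        Int.measurable_floor.comp (measurable_id.add_const _)
      have := (measurable_from_top (α := ℤ) (f := (Int.cast : ℤ → ℝ))).comp h2
      simpa [round_eq, Function.comp_def] using this
    exact measurable_const.min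
      ((measurable_const.mul ((measurable_id.sub h1).abs)).inv)
  -- interval integrability on every interval
  have hint : ∀ a b : ℝ, IntervalIntegrable f MeasureTheory.volume a b := by
    intro a b
    refine (intervalIntegrable_const (c := (1 : ℝ))).mono_fun'
      hmeas.aestronglyMeasurable.restrict (Filter.Eventually.of_forall fun x => ?_)
    show ‖f x‖ ≤ 1
    rw [Real.norm_eq_abs, abs_of_nonneg (hf_nonneg x)]
    exact hf_le_one x
  -- periodicity
  have hper : Function.Periodic f 1 := by
    intro u
    have h : (u + 1) - ((round (u + 1) : ℤ) : ℝ) = u - round u := by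
      rw [round_add_one]; push_cast; ring
    simp only [hf, h]
  -- evenness
  have heven : ∀ u, f (-u) = f u := by
    intro u
    have h : |(-u) - round (-u)| = |u - round u| := by
      rw [abs_sub_round_eq_min, abs_sub_round_eq_min]
      rcases eq_or_ne (Int.fract u) 0 with h0 | h0
      · rw [Int.fract_neg_eq_zero.2 h0, h0]
      · rw [Int.fract_neg h0, sub_sub_cancel, min_comm]
    simp only [hf, h]
  -- value of f on [0, 1/2]
  have hval : ∀ x : ℝ, 0 ≤ x → x ≤ 1 / 2 → f x = min 1 ((r * x)⁻¹) := by
    intro x h0 h2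
    have h : |x - round x| = x := by
      rcases h2.lt_or_eq with h | h
      · have hz : round x = 0 :=
          round_eq_zero_iff.2 ⟨by linarith, h⟩
        rw [hz]; push_cast; rw [sub_zero, abs_of_nonneg h0]
      · subst h
        norm_num [round_eq]
    simp only [hf, h]
  -- the split point
  set t : ℝ := min (1 / 2) (1 / r) with ht
  have ht0 : 0 < t := lt_min (by norm_num) (by positivity)
  have ht2 : t ≤ 1 / 2 := min_le_left _ _
  have htr : t ≤ 1 / r := min_le_right _ _
  -- bound on ∫_0^t f
  have hb1 : (∫ x in (0 : ℝ)..t, f x) ≤ 1 / r := by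
    have h1 : (∫ x in (0 : ℝ)..t, f x) ≤ ∫ x in (0 : ℝ)..t, (1 : ℝ) := by
      apply intervalIntegral.integral_mono_on ht0.le (hint 0 t) intervalIntegrable_const
      intro x _; exact hf_le_one x
    have h2 : (∫ x in (0 : ℝ)..t, (1 : ℝ)) = t := by simp
    calc (∫ x in (0 : ℝ)..t, f x) ≤ ∫ x in (0 : ℝ)..t, (1 : ℝ) := h1
      _ = t := h2
      _ ≤ 1 / r := htr
  -- bound on ∫_t^{1/2} f
  have hb2 : (∫ x in t..(1 / 2 : ℝ), f x) ≤ L / r := by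
    have hcont : ContinuousOn (fun x : ℝ => (r : ℝ)⁻¹ * x⁻¹) (Set.uIcc t (1 / 2)) := by
      apply ContinuousOn.mul continuousOn_const
      apply ContinuousOn.inv₀ continuousOn_id
      intro x hx
      rw [Set.uIcc_of_le ht2] at hx
      exact ne_of_gt (lt_of_lt_of_le ht0 hx.1)
    have hgint : IntervalIntegrable (fun x : ℝ => (r : ℝ)⁻¹ * x⁻¹)
        MeasureTheory.volume t (1 / 2) := hcont.intervalIntegrable
    have h1 : (∫ x in t..(1 / 2 : ℝ), f x) ≤ ∫ x in t..(1 / 2 : ℝ), (r : ℝ)⁻¹ * x⁻¹ := by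
      apply intervalIntegral.integral_mono_on ht2 (hint _ _) hgint
      intro x hx
      rw [hval x (le_trans ht0.le hx.1) hx.2]
      calc min 1 ((r * x)⁻¹) ≤ (r * x)⁻¹ := min_le_right _ _
        _ = (r : ℝ)⁻¹ * x⁻¹ := mul_inv _ _
    have h2 : (∫ x in t..(1 / 2 : ℝ), (r : ℝ)⁻¹ * x⁻¹) = (r : ℝ)⁻¹ * Real.log ((1 / 2) / t) := by
      rw [intervalIntegral.integral_const_mul, integral_inv]
      intro hx
      rw [Set.uIcc_of_le ht2] at hx
      exact absurd hx.1 (not_le.2 ht0)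
    have h3 : Real.log ((1 / 2) / t) ≤ L := by
      have hle : (1 / 2 : ℝ) / t ≤ r := by
        rw [div_le_iff₀ ht0]
        rcases le_total (1 / 2 : ℝ) (1 / r) with h | h
        · have : t = 1 / 2 := min_eq_left h
          rw [this]; nlinarith
        · have : t = 1 / r := min_eq_right h
          rw [this, mul_one_div, div_self (ne_of_gt hr0)]; linarith
      calc Real.log ((1 / 2) / t) ≤ Real.log r :=
            Real.log_le_log (by positivity) hle
        _ ≤ L := le_max_right _ _
    calc (∫ x in t..(1 / 2 : ℝ), f x) ≤ (r : ℝ)⁻¹ * Real.log ((1 / 2) / t) := h2 ▸ h1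
      _ ≤ (r : ℝ)⁻¹ * L := by
          apply mul_le_mul_of_nonneg_left h3 (by positivity)
      _ = L / r := by rw [inv_mul_eq_div]
  -- ∫_0^{1/2} f ≤ 2 L / r
  have hhalf : (∫ x in (0 : ℝ)..(1 / 2 : ℝ), f x) ≤ 2 * L / r := by
    have hsplit : (∫ x in (0 : ℝ)..(1 / 2 : ℝ), f x)
        = (∫ x in (0 : ℝ)..t, f x) + ∫ x in t..(1 / 2 : ℝ), f x :=
      (intervalIntegral.integral_add_adjacent_intervals (hint 0 t) (hint t (1 / 2))).symm
    rw [hsplit]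
    have h1L : (1 : ℝ) / r ≤ L / r := by gcongr
    calc (∫ x in (0 : ℝ)..t, f x) + (∫ x in t..(1 / 2 : ℝ), f x)
        ≤ 1 / r + L / r := add_le_add hb1 hb2
      _ ≤ L / r + L / r := add_le_add h1L le_rfl
      _ = 2 * L / r := by ring
  -- ∫_0^1 f ≤ 4 L / r
  have hone : (∫ x in (0 : ℝ)..(1 : ℝ), f x) ≤ 4 * L / r := by
    have hshift : (∫ x in (0 : ℝ)..(1 : ℝ), f x)
        = ∫ x in (-(1 / 2) : ℝ)..(1 / 2 : ℝ), f x := by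
      have h := hper.intervalIntegral_add_eq 0 (-(1 / 2))
      rw [zero_add, show (-(1 / 2 : ℝ) + 1) = 1 / 2 by norm_num] at h
      exact h
    have hneg : (∫ x in (-(1 / 2) : ℝ)..(0 : ℝ), f x)
        = ∫ x in (0 : ℝ)..(1 / 2 : ℝ), f x := by
      have h := intervalIntegral.integral_comp_neg (a := (0:ℝ)) (b := (1/2:ℝ)) f
      simp only [heven, neg_zero] at h
      exact h.symm
    have hsplit : (∫ x in (-(1 / 2) : ℝ)..(1 / 2 : ℝ), f x)
        = (∫ x in (-(1 / 2) : ℝ)..(0 : ℝ), f x) + ∫ x in (0 : ℝ)..(1 / 2 : ℝ), f x :=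
      (intervalIntegral.integral_add_adjacent_intervals (hint _ _) (hint _ _)).symm
    rw [hshift, hsplit, hneg]
    calc (∫ x in (0:ℝ)..(1/2:ℝ), f x) + (∫ x in (0:ℝ)..(1/2:ℝ), f x)
        ≤ 2 * L / r + 2 * L / r := add_le_add hhalf hhalf
      _ = 4 * L / r := by ring
  -- substitution u = η z
  have hsub : (∫ z in (-R)..R, f (η * z)) = η⁻¹ * ∫ u in (η * (-R))..(η * R), f u := by
    rw [intervalIntegral.integral_comp_mul_left f (ne_of_gt hη0)]
    simp [smul_eq_mul]
  -- number of periods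
  set n : ℕ := ⌈η * R⌉₊ with hn
  have hηR1 : (1 : ℝ) ≤ η * R := le_trans hR (le_mul_of_one_le_left (by linarith) hη)
  have hnge : η * R ≤ (n : ℝ) := Nat.le_ceil _
  have hnle : (n : ℝ) ≤ 2 * (η * R) := by
    have := Nat.ceil_lt_add_one (le_of_lt (lt_of_lt_of_le one_pos hηR1))
    have h2 : (n : ℝ) < η * R + 1 := this
    linarith
  -- enlarge to [-n, n]
  have hmono : (∫ u in (η * (-R))..(η * R), f u) ≤ ∫ u in (-(n : ℝ))..(n : ℝ), f u := by
    apply intervalIntegral.integral_mono_interval (by rw [mul_neg]; linarith)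
      (by nlinarith) hnge (Filter.Eventually.of_forall hf_nonneg) (hint _ _)
  -- periodic summation
  have hperiodsum : (∫ u in (-(n : ℝ))..(n : ℝ), f u)
      = (2 * n : ℤ) • ∫ x in (0 : ℝ)..(1 : ℝ), f x := by
    have h1 := hper.intervalIntegral_add_zsmul_eq (2 * n) (-(n : ℝ)) hint
    have h2 : (-(n : ℝ)) + (2 * n : ℤ) • (1 : ℝ) = (n : ℝ) := by
      rw [zsmul_eq_mul]; push_cast; ring
    rw [h2] at h1
    rw [h1]
    congr 1
    have := hper.intervalIntegral_add_eq (-(n : ℝ)) 0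
    simpa using this
  -- put everything together
  have hIbound : (∫ u in (-(n : ℝ))..(n : ℝ), f u) ≤ 2 * (n : ℝ) * (4 * L / r) := by
    rw [hperiodsum]
    have : ((2 * n : ℤ) : ℝ) • (∫ x in (0 : ℝ)..(1 : ℝ), f x)
        ≤ ((2 * n : ℤ) : ℝ) * (4 * L / r) := by
      rw [smul_eq_mul]
      apply mul_le_mul_of_nonneg_left hone (by positivity)
    calc (2 * n : ℤ) • (∫ x in (0 : ℝ)..(1 : ℝ), f x)
        = ((2 * n : ℤ) : ℝ) * (∫ x in (0 : ℝ)..(1 : ℝ), f x) := by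
          rw [zsmul_eq_mul]
      _ ≤ ((2 * n : ℤ) : ℝ) * (4 * L / r) := by
          apply mul_le_mul_of_nonneg_left hone (by positivity)
      _ = 2 * (n : ℝ) * (4 * L / r) := by push_cast; ring
  show (∫ z in (-R)..R, f (η * z)) ≤ 16 * R * L / r
  rw [hsub]
  calc η⁻¹ * ∫ u in (η * (-R))..(η * R), f u
      ≤ η⁻¹ * (2 * (n : ℝ) * (4 * L / r)) := by
        apply mul_le_mul_of_nonneg_left (le_trans hmono hIbound) (by positivity)
    _ ≤ η⁻¹ * (2 * (2 * (η * R)) * (4 * L / r)) := by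
        apply mul_le_mul_of_nonneg_left ?_ (by positivity)
        apply mul_le_mul_of_nonneg_right ?_ (by positivity)
        linarith
    _ = 16 * R * L / r * (η⁻¹ * η) := by ring
    _ = 16 * R * L / r := by
        rw [inv_mul_cancel₀ (ne_of_gt hη0), mul_one]
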